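/- arXiv:2509.02742 — 3 statements merged into one kernel-verified Lean document; each statement's English description precedes it below -/
import Mathlib

section
/- Let a > 0. A C^2 function u on (0,infinity) satisfies (u''(r))^2 + (a/r^2)*(u'(r))^2 = (1/(a+1)) * (u''(r) + (a/r)*u'(r))^2 for all r > 0 if and only if u(r) = alpha*r^2 + gamma for some real constants alpha, gamma. -/
open Set

/-- A function with zero derivative at every point of an open convex set is constant there. -/
lemma const_of_hasDerivAt_zero {s : Set ℝ} (hs : IsOpen s) (hc : Convex ℝ s) {f : ℝ → ℝ}
    (hf : ∀ x ∈ s, HasDerivAt f 0 x) {x y : ℝ} (hx : x ∈ s) (hy : y ∈ s) : f x = f y := by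
  refine hc.is_const_of_fderivWithin_eq_zero (fun z hz => ((hf z hz).differentiableAt).differentiableWithinAt) (fun z hz => ?_) hx hy
  rw [fderivWithin_of_isOpen hs hz]
  have := (hf z hz).hasFDerivAt.fderiv
  rw [this]
  ext
  simp

theorem stmt_2 (a : ℝ) (ha : 0 < a) (u : ℝ → ℝ)
    (hu : ContDiffOn ℝ 2 u (Ioi 0)) :
    (∀ r ∈ Ioi (0 : ℝ),
        (deriv (deriv u) r) ^ 2 + (a / r ^ 2) * (deriv u r) ^ 2 =
          (1 / (a + 1)) * (deriv (deriv u) r + (a / r) * deriv u r) ^ 2) ↔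
      ∃ α γ : ℝ, ∀ r ∈ Ioi (0 : ℝ), u r = α * r ^ 2 + γ := by
  have ha1 : a + 1 ≠ 0 := by linarith
  constructor
  · intro h
    -- u is differentiable on Ioi 0, deriv u is differentiable on Ioi 0
    have hu1 : DifferentiableOn ℝ u (Ioi 0) := hu.differentiableOn (by norm_num)
    have hd1 : ContDiffOn ℝ 1 (deriv u) (Ioi 0) :=
      hu.deriv_of_isOpen isOpen_Ioi (by norm_num)
    have hd1' : DifferentiableOn ℝ (deriv u) (Ioi 0) := hd1.differentiableOn (by norm_num)
    have hderivAt : ∀ r ∈ Ioi (0:ℝ), HasDerivAt u (deriv u r) r := fun r hr =>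
      ((hu1.differentiableAt (isOpen_Ioi.mem_nhds hr)).hasDerivAt)
    have hderiv2At : ∀ r ∈ Ioi (0:ℝ), HasDerivAt (deriv u) (deriv (deriv u) r) r := fun r hr =>
      ((hd1'.differentiableAt (isOpen_Ioi.mem_nhds hr)).hasDerivAt)
    -- the equation forces u'' = u'/r
    have key : ∀ r ∈ Ioi (0:ℝ), deriv (deriv u) r = deriv u r / r := by
      intro r hr
      have hr0 : (0:ℝ) < r := hr
      have heq := h r hr
      set x := deriv (deriv u) r
      set y := deriv u r
      have hne : r ≠ 0 := ne_of_gt hr0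
      have heq' : (x ^ 2 * r ^ 2 + a * y ^ 2) * ((a + 1) * r ^ 2) = (x * r + a * y) ^ 2 * r ^ 2 := by
        field_simp at heq
        linear_combination r ^ 2 * heq
      have hsq : a * (x * r - y) ^ 2 * r ^ 2 = 0 := by linear_combination heq'
      have hsq2 : a * (x * r - y) ^ 2 = 0 := by
        rcases mul_eq_zero.mp hsq with h' | h'
        · exact h'
        · exact absurd h' (pow_ne_zero 2 hne)
      have h3 : x * r - y = 0 := by
        have := pow_eq_zero_iff (n := 2) (by norm_num) |>.mp
          (by
            rcases mul_eq_zero.mp hsq2 with h' | h'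
            · exact absurd h' (ne_of_gt ha)
            · exact h')
        exact this
      field_simp
      linarith [h3]
    -- g r = deriv u r / r has zero derivative on Ioi 0
    set g : ℝ → ℝ := fun r => deriv u r / r with hg
    have hgderiv : ∀ r ∈ Ioi (0:ℝ), HasDerivAt g 0 r := by
      intro r hr
      have hr0 : (0:ℝ) < r := hr
      have hD := (hderiv2At r hr).div (hasDerivAt_id r) (ne_of_gt hr0)
      refine hD.congr_deriv ?_
      simp only [id_eq]
      rw [key r hr]
      field_simp
      ring
    set c : ℝ := g 1 with hc
    have hgconst : ∀ r ∈ Ioi (0:ℝ), g r = c := fun r hr =>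
      const_of_hasDerivAt_zero isOpen_Ioi (convex_Ioi 0) hgderiv hr (by norm_num : (1:ℝ) ∈ Ioi 0)
    have hderivu : ∀ r ∈ Ioi (0:ℝ), deriv u r = c * r := by
      intro r hr
      have hr0 : (0:ℝ) < r := hr
      have := hgconst r hr
      simp only [hg] at this
      field_simp at this
      linarith [this]
    -- h r = u r - (c/2) r^2 has zero derivative
    set w : ℝ → ℝ := fun r => u r - c / 2 * r ^ 2 with hw
    have hwderiv : ∀ r ∈ Ioi (0:ℝ), HasDerivAt w 0 r := by
      intro r hr
      have hD := (hderivAt r hr).sub ((hasDerivAt_pow 2 r).const_mul (c/2))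
      refine hD.congr_deriv ?_
      rw [hderivu r hr]
      push_cast
      ring
    refine ⟨c / 2, u 1 - c / 2, fun r hr => ?_⟩
    have := const_of_hasDerivAt_zero isOpen_Ioi (convex_Ioi 0) hwderiv hr
      (by norm_num : (1:ℝ) ∈ Ioi 0)
    simp only [hw] at this
    norm_num at this
    linarith [this]
  · rintro ⟨α, γ, h⟩ r hr
    have hr0 : (0:ℝ) < r := hr
    have hd1 : ∀ s ∈ Ioi (0:ℝ), deriv u s = 2 * α * s := by
      intro s hs
      have hev : u =ᶠ[nhds s] fun t => α * t ^ 2 + γ :=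
        Filter.eventually_of_mem (isOpen_Ioi.mem_nhds hs) h
      rw [hev.deriv_eq]
      have : HasDerivAt (fun t => α * t ^ 2 + γ) (α * (2 * s ^ (2-1))) s :=
        ((hasDerivAt_pow 2 s).const_mul α).add_const γ
      rw [this.deriv]; push_cast; ring
    have hd2 : deriv (deriv u) r = 2 * α := by
      have hev : deriv u =ᶠ[nhds r] fun t => 2 * α * t :=
        Filter.eventually_of_mem (isOpen_Ioi.mem_nhds hr) hd1
      rw [hev.deriv_eq]
      have : HasDerivAt (fun t => 2 * α * t) (2 * α) r := by
        simpa using (hasDerivAt_id r).const_mul (2 * α)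
      rw [this.deriv]
    rw [hd2, hd1 r hr]
    field_simp
    ring
end

section
/- Let Omega be an open subset of (0,infinity) x R^k and u in C^3(Omega) solve L_a u = -1. Then the function P_a = |grad u|^2 + (2/(a+1+k)) u satisfies L_a P_a >= 0 in Omega. -/
open Set Finset

/-- Partial derivative of `u` in the `i`-th coordinate direction. -/
noncomputable def pd {n : ℕ} (i : Fin n) (u : (Fin n → ℝ) → ℝ) (x : Fin n → ℝ) : ℝ :=
  fderiv ℝ u x (Pi.single i 1)

/-- The Weinstein operator `L_a u = ∂_rr u + (a/r) ∂_r u + Δ_y u` on `ℝ^+ × ℝ^k`,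
where `r = x 0` and `y = (x 1, …, x k)`. -/
noncomputable def weinstein {k : ℕ} (a : ℝ) (u : (Fin (k + 1) → ℝ) → ℝ)
    (x : Fin (k + 1) → ℝ) : ℝ :=
  (∑ i, pd i (pd i u) x) + (a / x 0) * pd 0 u x

section Helpers

variable {n : ℕ} {f g : (Fin n → ℝ) → ℝ} {x : Fin n → ℝ}

lemma contDiffAt_pd {m : ℕ} (i : Fin n) (hf : ContDiffAt ℝ (m + 1) f x) :
    ContDiffAt ℝ m (pd i f) x := by
  have h1 : ContDiffAt ℝ m (fderiv ℝ f) x := hf.fderiv_right (by exact_mod_cast le_rfl)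
  exact h1.clm_apply contDiffAt_const

lemma pd_congr (h : f =ᶠ[nhds x] g) (i : Fin n) : pd i f x = pd i g x := by
  unfold pd; rw [h.fderiv_eq]

lemma pd_add (i : Fin n) (hf : DifferentiableAt ℝ f x) (hg : DifferentiableAt ℝ g x) :
    pd i (fun z => f z + g z) x = pd i f x + pd i g x := by
  unfold pd; rw [fderiv_fun_add hf hg]; rfl

lemma pd_mul (i : Fin n) (hf : DifferentiableAt ℝ f x) (hg : DifferentiableAt ℝ g x) :
    pd i (fun z => f z * g z) x = pd i f x * g x + f x * pd i g x := by
  unfold pd; rw [fderiv_fun_mul hf hg]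
  simp [mul_comm]
  ring

lemma pd_const_mul (i : Fin n) (c : ℝ) (hf : DifferentiableAt ℝ f x) :
    pd i (fun z => c * f z) x = c * pd i f x := by
  unfold pd; rw [fderiv_const_mul hf]; rfl

lemma pd_sum {ι : Type*} (s : Finset ι) (F : ι → (Fin n → ℝ) → ℝ) (i : Fin n)
    (hF : ∀ j ∈ s, DifferentiableAt ℝ (F j) x) :
    pd i (fun z => ∑ j ∈ s, F j z) x = ∑ j ∈ s, pd i (F j) x := by
  unfold pd; rw [fderiv_fun_sum hF]; simp

lemma pd_const (i : Fin n) (c : ℝ) : pd i (fun _ => c) x = 0 := by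
  unfold pd; simp

lemma pd_comm (hf : ContDiffAt ℝ 2 f x) (i j : Fin n) :
    pd i (pd j f) x = pd j (pd i f) x := by
  have hs : IsSymmSndFDerivAt ℝ f x := hf.isSymmSndFDerivAt (by simp)
  have hd : DifferentiableAt ℝ (fderiv ℝ f) x :=
    (hf.fderiv_right (m := 1) (by exact_mod_cast le_rfl)).differentiableAt one_ne_zero
  have key : ∀ v w : Fin n → ℝ,
      fderiv ℝ (fun z => fderiv ℝ f z w) x v = fderiv ℝ (fderiv ℝ f) x v w := by
    intro v w
    rw [fderiv_clm_apply hd (differentiableAt_const w)]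
    simp
  unfold pd
  rw [key, key, hs]

lemma hasFDerivAt_div_proj0 {k : ℕ} {x : Fin (k+1) → ℝ} (a : ℝ) (hx0 : x 0 ≠ 0) :
    HasFDerivAt (fun z : Fin (k+1) → ℝ => a / z 0)
      (-((a * ((x 0) ^ 2)⁻¹) • ContinuousLinearMap.proj (R := ℝ) (φ := fun _ : Fin (k+1) => ℝ) 0))
      x := by
  have h1 : HasDerivAt (fun t : ℝ => a * t⁻¹) (a * (-((x 0) ^ 2)⁻¹)) (x 0) :=
    (hasDerivAt_inv hx0).const_mul a
  have h2 : HasFDerivAt (fun z : Fin (k+1) → ℝ => z 0)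
      (ContinuousLinearMap.proj (R := ℝ) (φ := fun _ : Fin (k+1) => ℝ) 0) x :=
    (ContinuousLinearMap.proj (R := ℝ) (φ := fun _ : Fin (k+1) => ℝ)
      0).hasFDerivAt.congr_of_eventuallyEq (Filter.Eventually.of_forall fun z => rfl)
  have h3 := h1.comp_hasFDerivAt x h2
  simpa [Function.comp_def, div_eq_mul_inv] using h3

lemma diffAt_div_proj0 {k : ℕ} {x : Fin (k+1) → ℝ} (a : ℝ) (hx0 : x 0 ≠ 0) :
    DifferentiableAt ℝ (fun z : Fin (k+1) → ℝ => a / z 0) x :=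
  (hasFDerivAt_div_proj0 a hx0).differentiableAt

lemma pd_div_proj0 {k : ℕ} {x : Fin (k+1) → ℝ} (a : ℝ) (hx0 : x 0 ≠ 0) (i : Fin (k+1)) :
    pd i (fun z => a / z 0) x = (if i = 0 then -(a / (x 0) ^ 2) else 0) := by
  unfold pd
  rw [(hasFDerivAt_div_proj0 a hx0).fderiv]
  simp only [ContinuousLinearMap.neg_apply, ContinuousLinearMap.coe_smul', Pi.smul_apply,
    ContinuousLinearMap.proj_apply, smul_eq_mul]
  rcases eq_or_ne i 0 with h | h
  · subst h; simp; ring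
  · simp [h, Pi.single_eq_of_ne h]

end Helpers

lemma weinberger_arith (a kk S D Q b : ℝ) (ha : 0 ≤ a) (hkk : 0 ≤ kk)
    (hS1 : S + a * b = -1) (hCS : S ^ 2 ≤ (kk + 1) * D) (hDQ : D ≤ Q) :
    0 ≤ 2 * Q + 2 * a * b ^ 2 - 2 / (a + 1 + kk) := by
  have hpos : 0 < a + 1 + kk := by linarith
  have key : 1 ≤ (a + 1 + kk) * (D + a * b ^ 2) := by
    have hsq : (S + a * b) ^ 2 = 1 := by rw [hS1]; norm_num
    nlinarith [mul_nonneg ha (sq_nonneg ((kk + 1) * b - S)),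
      mul_nonneg ha (sub_nonneg.2 hCS), sub_nonneg.2 hCS,
      mul_nonneg ha (sq_nonneg b), mul_nonneg hkk (sub_nonneg.2 hCS)]
  have h2 : 2 / (a + 1 + kk) ≤ 2 * (D + a * b ^ 2) := by
    rw [div_le_iff₀ hpos]; nlinarith [key]
  nlinarith [mul_nonneg ha (sq_nonneg b)]

theorem stmt_6 (a : ℝ) (ha : 0 ≤ a) (k : ℕ)
    (Ω : Set (Fin (k + 1) → ℝ)) (hΩopen : IsOpen Ω)
    (hΩ : Ω ⊆ {x : Fin (k + 1) → ℝ | 0 < x 0})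
    (u : (Fin (k + 1) → ℝ) → ℝ) (hu : ContDiffOn ℝ 3 u Ω)
    (heq : ∀ x ∈ Ω, weinstein a u x = -1) :
    ∀ x ∈ Ω,
      weinstein a (fun z => (∑ i, (pd i u z) ^ 2) + (2 / (a + 1 + k)) * u z) x ≥ 0 := by
  classical
  intro x hx
  set c : ℝ := 2 / (a + 1 + k) with hc
  have hx0 : (0:ℝ) < x 0 := hΩ hx
  have hev : ∀ᶠ z in nhds x, z ∈ Ω := hΩopen.eventually_mem hx
  -- regularity
  have hu3 : ∀ z ∈ Ω, ContDiffAt ℝ 3 u z := fun z hz => (hu z hz).contDiffAt (hΩopen.mem_nhds hz)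
  have hu2 : ∀ z ∈ Ω, ∀ i, ContDiffAt ℝ 2 (pd i u) z := by
    intro z hz i
    exact_mod_cast contDiffAt_pd (m := 2) i (by exact_mod_cast hu3 z hz)
  have hu1 : ∀ z ∈ Ω, ∀ i j, ContDiffAt ℝ 1 (pd j (pd i u)) z := by
    intro z hz i j
    exact_mod_cast contDiffAt_pd (m := 1) j (by exact_mod_cast hu2 z hz i)
  have hd1 : ∀ z ∈ Ω, ∀ i, DifferentiableAt ℝ (pd i u) z :=
    fun z hz i => (hu2 z hz i).differentiableAt (by norm_num)
  have hd2 : ∀ z ∈ Ω, ∀ i j, DifferentiableAt ℝ (pd j (pd i u)) z :=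
    fun z hz i j => (hu1 z hz i j).differentiableAt (by norm_num)
  have hdu : ∀ z ∈ Ω, DifferentiableAt ℝ u z :=
    fun z hz => (hu3 z hz).differentiableAt (by norm_num)
  have hcomm : ∀ z ∈ Ω, ∀ i j, pd i (pd j u) z = pd j (pd i u) z :=
    fun z hz i j => pd_comm ((hu3 z hz).of_le (by norm_num)) i j
  -- differentiability of the coefficient a / z 0
  have hg : DifferentiableAt ℝ (fun z : Fin (k+1) → ℝ => a / z 0) x :=
    diffAt_div_proj0 a hx0.ne'
  -- the key third-derivative identity
  have hA : ∀ i, (∑ j, pd j (pd j (pd i u)) x)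
      = -((a / x 0) * pd 0 (pd i u) x)
        + (if i = 0 then (a / (x 0) ^ 2) * pd 0 u x else 0) := by
    intro i
    have hF : (fun z => (∑ j, pd j (pd j u) z) + (a / z 0) * pd 0 u z)
        =ᶠ[nhds x] fun _ => (-1 : ℝ) := by
      filter_upwards [hev] with z hz
      simpa [weinstein] using heq z hz
    have h0 : pd i (fun z => (∑ j, pd j (pd j u) z) + (a / z 0) * pd 0 u z) x = 0 := by
      rw [pd_congr hF, pd_const]
    rw [pd_add (f := fun z => ∑ j, pd j (pd j u) z) (g := fun z => a / z 0 * pd 0 u z) i (DifferentiableAt.fun_sum fun j _ => hd2 x hx j j) (hg.mul (hd1 x hx 0)),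
        pd_sum univ _ i (fun j _ => hd2 x hx j j),
        pd_mul i hg (hd1 x hx 0), pd_div_proj0 a hx0.ne'] at h0
    have hsw : ∀ j, pd i (pd j (pd j u)) x = pd j (pd j (pd i u)) x := by
      intro j
      have e2 : pd i (pd j u) =ᶠ[nhds x] pd j (pd i u) := by
        filter_upwards [hev] with z hz using hcomm z hz i j
      rw [pd_comm (hu2 x hx j) i j, pd_congr e2]
    have hsw0 : pd i (pd 0 u) x = pd 0 (pd i u) x :=
      pd_comm ((hu3 x hx).of_le (by norm_num)) i 0
    simp only [hsw, hsw0] at h0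
    rcases eq_or_ne i 0 with h | h
    · subst h; norm_num at h0 ⊢; linarith
    · simp only [if_neg h] at h0 ⊢; linarith
  -- the P function and its first derivatives
  set P : (Fin (k+1) → ℝ) → ℝ := fun z => (∑ i, (pd i u z) ^ 2) + c * u z with hP
  have hPd : ∀ z ∈ Ω, ∀ j, pd j P z
      = (∑ i, 2 * (pd i u z * pd j (pd i u) z)) + c * pd j u z := by
    intro z hz j
    have hsum : DifferentiableAt ℝ (fun w => ∑ i, (pd i u w) ^ 2) z :=
      DifferentiableAt.fun_sum fun i _ => (hd1 z hz i).pow 2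
    rw [hP, pd_add j hsum ((hdu z hz).const_mul c),
        pd_sum univ (fun i w => (pd i u w) ^ 2) j (fun i _ => (hd1 z hz i).pow 2), pd_const_mul j c (hdu z hz)]
    congr 1
    refine Finset.sum_congr rfl fun i _ => ?_
    have hrw : (fun w => (pd i u w) ^ 2) = fun w => pd i u w * pd i u w := by
      funext w; ring
    rw [hrw, pd_mul j (hd1 z hz i) (hd1 z hz i)]
    ring
  -- second derivatives of P at x
  have hP2 : ∀ j, pd j (pd j P) x
      = (∑ i, 2 * ((pd j (pd i u) x) ^ 2 + pd i u x * pd j (pd j (pd i u)) x))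
        + c * pd j (pd j u) x := by
    intro j
    have hPev : pd j P =ᶠ[nhds x]
        fun z => (∑ i, 2 * (pd i u z * pd j (pd i u) z)) + c * pd j u z := by
      filter_upwards [hev] with z hz using hPd z hz j
    have hsd : DifferentiableAt ℝ (fun z => ∑ i, 2 * (pd i u z * pd j (pd i u) z)) x :=
      DifferentiableAt.fun_sum fun i _ => ((hd1 x hx i).mul (hd2 x hx i j)).const_mul 2
    rw [pd_congr hPev, pd_add j hsd ((hd1 x hx j).const_mul c),
        pd_sum univ (fun i z => 2 * (pd i u z * pd j (pd i u) z)) j (fun i _ => ((hd1 x hx i).mul (hd2 x hx i j)).const_mul 2),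
        pd_const_mul j c (hd1 x hx j)]
    congr 1
    refine Finset.sum_congr rfl fun i _ => ?_
    rw [pd_const_mul (f := fun z => pd i u z * pd j (pd i u) z) j 2 ((hd1 x hx i).mul (hd2 x hx i j)),
        pd_mul j (hd1 x hx i) (hd2 x hx i j)]
    ring
  -- assemble weinstein of P
  have hsum1 : ∑ j, pd j (pd j P) x
      = (∑ j, ∑ i, 2 * ((pd j (pd i u) x) ^ 2 + pd i u x * pd j (pd j (pd i u)) x))
        + c * ∑ j, pd j (pd j u) x := by
    rw [Finset.mul_sum, ← Finset.sum_add_distrib]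
    exact Finset.sum_congr rfl fun j _ => hP2 j
  have hsum2 : (∑ j, ∑ i, 2 * ((pd j (pd i u) x) ^ 2 + pd i u x * pd j (pd j (pd i u)) x))
      = 2 * (∑ i, ∑ j, (pd j (pd i u) x) ^ 2)
        + ∑ i, 2 * pd i u x * (∑ j, pd j (pd j (pd i u)) x) := by
    rw [Finset.sum_comm]
    rw [Finset.mul_sum, ← Finset.sum_add_distrib]
    refine Finset.sum_congr rfl fun i _ => ?_
    rw [Finset.mul_sum, Finset.mul_sum, ← Finset.sum_add_distrib]
    refine Finset.sum_congr rfl fun j _ => ?_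
    ring
  have hsum3 : (∑ i, 2 * pd i u x * (∑ j, pd j (pd j (pd i u)) x))
      = -((a / x 0) * ∑ i, 2 * (pd i u x * pd 0 (pd i u) x))
        + 2 * a * (pd 0 u x) ^ 2 / (x 0) ^ 2 := by
    have : ∀ i : Fin (k+1), 2 * pd i u x * (∑ j, pd j (pd j (pd i u)) x)
        = -((a / x 0) * (2 * (pd i u x * pd 0 (pd i u) x)))
          + (if i = 0 then 2 * a * (pd 0 u x) ^ 2 / (x 0) ^ 2 else 0) := by
      intro i
      rw [hA i]
      rcases eq_or_ne i 0 with h | h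
      · subst h; norm_num; ring
      · simp only [if_neg h]; ring
    rw [Finset.sum_congr rfl fun i _ => this i, Finset.sum_add_distrib,
        Finset.sum_ite_eq' univ 0 (fun _ => 2 * a * (pd 0 u x) ^ 2 / (x 0) ^ 2)]
    simp only [Finset.mem_univ, if_true, Finset.sum_neg_distrib, ← Finset.mul_sum]
  have hWu : (∑ i, pd i (pd i u) x) + (a / x 0) * pd 0 u x = -1 := by
    simpa [weinstein] using heq x hx
  have hw : weinstein a P x
      = 2 * (∑ i, ∑ j, (pd j (pd i u) x) ^ 2) + 2 * a * (pd 0 u x) ^ 2 / (x 0) ^ 2 - c := by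
    have e0 : weinstein a P x = (∑ j, pd j (pd j P) x) + (a / x 0) * pd 0 P x := by
      simp only [weinstein]
    rw [e0, hsum1, hsum2, hsum3, hPd x hx 0]
    have e1 : (∑ j, pd j (pd j u) x) = ∑ i, pd i (pd i u) x := rfl
    rw [e1]
    linear_combination c * hWu
  -- final inequality
  have hQd : (∑ i, (pd i (pd i u) x) ^ 2) ≤ ∑ i, ∑ j, (pd j (pd i u) x) ^ 2 :=
    Finset.sum_le_sum fun i _ =>
      Finset.single_le_sum (f := fun j => (pd j (pd i u) x) ^ 2)
        (fun j _ => sq_nonneg _) (mem_univ i)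
  have hCS : (∑ i, pd i (pd i u) x) ^ 2 ≤ ((k : ℝ) + 1) * ∑ i, (pd i (pd i u) x) ^ 2 := by
    have h := Finset.sum_mul_sq_le_sq_mul_sq univ (fun _ : Fin (k+1) => (1:ℝ))
      (fun i => pd i (pd i u) x)
    simp only [one_pow, one_mul, Finset.sum_const, Finset.card_univ, Fintype.card_fin,
      nsmul_eq_mul] at h
    push_cast at h
    exact h.trans_eq (by ring)
  set S : ℝ := ∑ i, pd i (pd i u) x with hS
  set D : ℝ := ∑ i, (pd i (pd i u) x) ^ 2 with hD
  set Q : ℝ := ∑ i, ∑ j, (pd j (pd i u) x) ^ 2 with hQ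
  set b : ℝ := pd 0 u x / x 0 with hb
  have hab : (a / x 0) * pd 0 u x = a * b := by
    rw [hb]; field_simp
  have hb2 : 2 * a * (pd 0 u x) ^ 2 / (x 0) ^ 2 = 2 * a * b ^ 2 := by
    rw [hb]; field_simp; try ring
  have hS1 : S + a * b = -1 := by rw [← hab]; exact hWu
  rw [ge_iff_le, hw, hb2, hc]
  exact weinberger_arith a (k : ℝ) S D Q b ha (Nat.cast_nonneg k) hS1 hCS hQd
end

section
/- Let a != 0, R > 0, b_0 < b_1, and D = (0,R) x (b_0,b_1)^k. Suppose u in C^2(D) cap C^1(closure of D) satisfies L_a u = g in D with g in L^1(D), where L_a u = u_{rr} + (a/r)u_r + Delta_y u. Then for every y in (b_0,b_1)^k, the limit as r tends to 0+ of u_r(r,y) exists and equals 0. -/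
open Set Finset MeasureTheory Filter

/-- Partial derivative within a set `s` of `u` in the `i`-th coordinate direction. -/
noncomputable def pdWithin {n : ℕ} (s : Set (Fin n → ℝ)) (i : Fin n)
    (u : (Fin n → ℝ) → ℝ) (x : Fin n → ℝ) : ℝ :=
  fderivWithin ℝ u s x (Pi.single i 1)

/-- A finite family of positive reals admits a positive lower bound below any given
positive threshold. -/
lemma exists_pos_lt_forall_lt {k : ℕ} (f : Fin k → ℝ) (hf : ∀ i, 0 < f i)
    (c : ℝ) (hc : 0 < c) : ∃ d : ℝ, 0 < d ∧ d < c ∧ ∀ i, d < f i := by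
  cases k with
  | zero => exact ⟨c / 2, half_pos hc, half_lt_self hc, fun i => i.elim0⟩
  | succ n =>
    obtain ⟨i₀, -, hi₀⟩ := Finset.exists_min_image Finset.univ f ⟨0, Finset.mem_univ 0⟩
    refine ⟨min (c / 2) (f i₀ / 2), lt_min (half_pos hc) (half_pos (hf i₀)),
      (min_le_left _ _).trans_lt (half_lt_self hc), fun i => ?_⟩
    exact (min_le_right _ _).trans_lt ((half_lt_self (hf i₀)).trans_le (hi₀ i (Finset.mem_univ i)))

set_option maxHeartbeats 2000000 in
theorem stmt_18 (a : ℝ) (ha : a ≠ 0) (k : ℕ) (R : ℝ) (hR : 0 < R)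
    (b₀ b₁ : ℝ) (hb : b₀ < b₁)
    (D : Set (Fin (k + 1) → ℝ))
    (hD : D = {x | x 0 ∈ Ioo 0 R ∧ ∀ i : Fin k, x i.succ ∈ Ioo b₀ b₁})
    (u : (Fin (k + 1) → ℝ) → ℝ) (g : (Fin (k + 1) → ℝ) → ℝ)
    (huC2 : ContDiffOn ℝ 2 u D) (huC1 : ContDiffOn ℝ 1 u (closure D))
    (hg : IntegrableOn g D) (heq : ∀ x ∈ D, weinstein a u x = g x) :
    ∀ y : Fin k → ℝ, (∀ i, y i ∈ Ioo b₀ b₁) →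
      Tendsto (fun r : ℝ => pd 0 u (Fin.cons r y)) (nhdsWithin 0 (Ioi 0)) (nhds 0) ∧
      pdWithin (closure D) 0 u (Fin.cons 0 y) = 0 := by
  -- Description of `D` as a product set.
  have hDeq : D = Set.pi univ (Fin.cons (Ioo 0 R) (fun _ : Fin k => Ioo b₀ b₁)) := by
    rw [hD]; ext x
    simp only [Set.mem_pi, Set.mem_univ, forall_true_left, Set.mem_setOf_eq]
    rw [Fin.forall_fin_succ]
    simp [Fin.cons_zero, Fin.cons_succ]
  have hDopen : IsOpen D := by
    rw [hDeq]
    refine isOpen_set_pi Set.finite_univ fun j _ => ?_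
    refine Fin.cases ?_ (fun i => ?_) j <;> simp [Fin.cons_zero, Fin.cons_succ, isOpen_Ioo]
  have hclosure : closure D = Set.pi univ (Fin.cons (Icc 0 R) (fun _ : Fin k => Icc b₀ b₁)) := by
    rw [hDeq, closure_pi_set]
    refine Set.pi_congr rfl fun j _ => ?_
    refine Fin.cases ?_ (fun i => ?_) j <;>
      simp [Fin.cons_zero, Fin.cons_succ, closure_Ioo hR.ne, closure_Ioo hb.ne]
  have hDsub : D ⊆ closure D := subset_closure
  -- a point of `D`
  have hp₁ : (Fin.cons (R / 2) (fun _ : Fin k => (b₀ + b₁) / 2) : Fin (k + 1) → ℝ) ∈ D := by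
    rw [hD]
    refine ⟨?_, fun i => ?_⟩
    · rw [Fin.cons_zero]; exact ⟨half_pos hR, half_lt_self hR⟩
    · rw [Fin.cons_succ]; exact ⟨by linarith, by linarith⟩
  have hCcompact : IsCompact (closure D) := by
    rw [hclosure]
    refine isCompact_univ_pi fun j => ?_
    refine Fin.cases ?_ (fun i => ?_) j <;> simp [Fin.cons_zero, Fin.cons_succ, isCompact_Icc]
  have hCud : UniqueDiffOn ℝ (closure D) := by
    refine uniqueDiffOn_convex ?_ ?_
    · rw [hclosure]
      refine convex_pi fun j _ => ?_
      refine Fin.cases ?_ (fun i => ?_) j <;> simp [Fin.cons_zero, Fin.cons_succ, convex_Icc]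
    · exact ⟨_, (hDopen.subset_interior_iff.2 subset_closure) hp₁⟩
  set F : (Fin (k + 1) → ℝ) → (Fin (k + 1) → ℝ) →L[ℝ] ℝ := fderivWithin ℝ u (closure D) with hF
  have hFcont : ContinuousOn F (closure D) := huC1.continuousOn_fderivWithin hCud le_rfl
  have hFeq : ∀ x ∈ D, fderiv ℝ u x = F x := by
    intro x hx
    exact (fderivWithin_of_mem_nhds (mem_of_superset (hDopen.mem_nhds hx) subset_closure)).symm
  obtain ⟨M, hM⟩ : ∃ M, ∀ x ∈ closure D, ‖F x‖ ≤ M :=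
    hCcompact.exists_bound_of_continuousOn hFcont
  have hM0 : 0 ≤ M := le_trans (norm_nonneg _) (hM _ (hDsub hp₁))
  -- first derivatives are `C¹` on `D`
  have hpd1 : ∀ i : Fin (k + 1), ContDiffOn ℝ 1 (pd i u) D := by
    intro i
    have h1 : ContDiffOn ℝ 1 (fderiv ℝ u) D := huC2.fderiv_of_isOpen hDopen (by norm_num)
    exact h1.clm_apply contDiffOn_const
  have hpdcont : ∀ i : Fin (k + 1), ContinuousOn (pd i u) D := fun i => (hpd1 i).continuousOn
  have hpdiff : ∀ (i : Fin (k + 1)) (x : Fin (k + 1) → ℝ), x ∈ D →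
      HasFDerivAt (pd i u) (fderiv ℝ (pd i u) x) x := by
    intro i x hx
    exact (((hpd1 i).differentiableOn one_ne_zero).differentiableAt (hDopen.mem_nhds hx)).hasFDerivAt
  have hHcont : ContinuousOn
      (fun x => ∑ i : Fin (k + 1), fderiv ℝ (pd i u) x (Pi.single i 1)) D := by
    refine continuousOn_finset_sum _ fun i _ => ?_
    exact ((hpd1 i).continuousOn_fderiv_of_isOpen hDopen le_rfl).clm_apply continuousOn_const
  have hpdM : ∀ (i : Fin (k + 1)) (x : Fin (k + 1) → ℝ), x ∈ D → |pd i u x| ≤ M := by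
    intro i x hx
    rw [pd, hFeq x hx]
    calc |F x (Pi.single i 1)| ≤ ‖F x‖ * ‖(Pi.single i 1 : Fin (k + 1) → ℝ)‖ := by
          rw [← Real.norm_eq_abs]; exact (F x).le_opNorm _
      _ = ‖F x‖ := by rw [Pi.norm_single, norm_one, mul_one]
      _ ≤ M := hM x (hDsub hx)
  -- now fix `y`
  intro y hy
  set p₀ : Fin (k + 1) → ℝ := Fin.cons 0 y with hp₀def
  have hp₀ : p₀ ∈ closure D := by
    rw [hclosure]
    intro j _
    refine Fin.cases ?_ (fun i => ?_) j
    · show p₀ 0 ∈ Icc (0:ℝ) R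
      simp only [hp₀def, Fin.cons_zero]
      exact ⟨le_rfl, hR.le⟩
    · show p₀ i.succ ∈ Icc b₀ b₁
      simp only [hp₀def, Fin.cons_succ]
      exact ⟨(hy i).1.le, (hy i).2.le⟩
  set c : ℝ := F p₀ (Pi.single 0 1) with hcdef
  have hφcont : ContinuousOn (fun x => F x (Pi.single 0 1)) (closure D) :=
    hFcont.clm_apply continuousOn_const
  -- the limit statement, towards `c`
  have htend : Tendsto (fun r : ℝ => pd 0 u (Fin.cons r y)) (nhdsWithin 0 (Ioi 0)) (nhds c) := by
    have hcons : Continuous (fun r : ℝ => (Fin.cons r y : Fin (k + 1) → ℝ)) := by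
      refine continuous_pi fun j => ?_
      refine Fin.cases ?_ (fun i => ?_) j
      · simp only [Fin.cons_zero]; exact continuous_id
      · simpa [Fin.cons_succ] using continuous_const
    have hmemD : ∀ r ∈ Ioo (0 : ℝ) R, (Fin.cons r y : Fin (k + 1) → ℝ) ∈ D := by
      intro r hr
      rw [hD]
      exact ⟨by simpa [Fin.cons_zero] using hr, fun i => by simpa [Fin.cons_succ] using hy i⟩
    have hIooMem : Ioo (0 : ℝ) R ∈ nhdsWithin (0 : ℝ) (Ioi 0) :=
      Ioo_mem_nhdsGT_of_mem ⟨le_rfl, hR⟩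
    have h1 : Tendsto (fun r : ℝ => (Fin.cons r y : Fin (k + 1) → ℝ))
        (nhdsWithin 0 (Ioi 0)) (nhdsWithin p₀ (closure D)) := by
      rw [tendsto_nhdsWithin_iff]
      constructor
      · have : Tendsto (fun r : ℝ => (Fin.cons r y : Fin (k + 1) → ℝ)) (nhds 0) (nhds p₀) := by
          simpa [hp₀def] using hcons.tendsto 0
        exact this.mono_left nhdsWithin_le_nhds
      · filter_upwards [hIooMem] with r hr
        exact hDsub (hmemD r hr)
    have h2 : Tendsto (fun x => F x (Pi.single 0 1)) (nhdsWithin p₀ (closure D)) (nhds c) :=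
      hφcont p₀ hp₀
    refine (h2.comp h1).congr' ?_
    filter_upwards [hIooMem] with r hr
    simp only [Function.comp]
    rw [pd, hFeq _ (hmemD r hr)]
  -- it suffices to show `c = 0`
  suffices hc : c = 0 by
    refine ⟨hc ▸ htend, ?_⟩
    rw [pdWithin]
    exact hc
  by_contra hc0
  -- continuity of the derivative at `p₀` within the closure
  obtain ⟨η, hη0, hη⟩ : ∃ η > 0, ∀ x ∈ closure D, dist x p₀ < η →
      |F x (Pi.single 0 1) - c| < |c| / 2 := by
    have h := Metric.continuousWithinAt_iff.1 (hφcont p₀ hp₀) (|c| / 2)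
      (by positivity)
    obtain ⟨η, hη0, hη⟩ := h
    exact ⟨η, hη0, fun x hx hd => by
      simpa [Real.dist_eq, hcdef] using hη hx hd⟩
  -- choose δ
  obtain ⟨δ, hδ0, hδη, hδy⟩ := exists_pos_lt_forall_lt
    (fun i => min (y i - b₀) (b₁ - y i))
    (fun i => lt_min (by linarith [(hy i).1]) (by linarith [(hy i).2])) η hη0
  have hδy1 : ∀ i, b₀ < y i - δ := fun i =>
    by have := (lt_min_iff.1 (hδy i)).1; linarith
  have hδy2 : ∀ i, y i + δ < b₁ := fun i =>
    by have := (lt_min_iff.1 (hδy i)).2; linarith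
  set r₁ : ℝ := min (R / 2) (η / 2) with hr₁def
  have hr₁0 : 0 < r₁ := lt_min (half_pos hR) (half_pos hη0)
  have hr₁R : r₁ < R := (min_le_left _ _).trans_lt (half_lt_self hR)
  have hr₁η : r₁ < η := (min_le_right _ _).trans_lt (half_lt_self hη0)
  -- the boxes
  set Bu : Fin (k + 1) → ℝ := Fin.cons r₁ (fun i => y i + δ) with hBu
  have hbox_subset_D : ∀ ε : ℝ, 0 < ε →
      Icc (Fin.cons ε (fun i => y i - δ) : Fin (k + 1) → ℝ) Bu ⊆ D := by
    intro ε hε x hx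
    rw [Set.mem_Icc] at hx
    rw [hD]
    constructor
    · have h1 := hx.1 0
      have h2 := hx.2 0
      simp only [hBu, Fin.cons_zero] at h1 h2
      exact ⟨hε.trans_le h1, h2.trans_lt hr₁R⟩
    · intro i
      have h1 := hx.1 i.succ
      have h2 := hx.2 i.succ
      simp only [hBu, Fin.cons_succ] at h1 h2
      exact ⟨(hδy1 i).trans_le h1, h2.trans_lt (hδy2 i)⟩
  have hbox_near : ∀ ε : ℝ, 0 < ε →
      ∀ x ∈ Icc (Fin.cons ε (fun i => y i - δ) : Fin (k + 1) → ℝ) Bu,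
        |pd 0 u x - c| ≤ |c| / 2 := by
    intro ε hε x hx
    have hxD : x ∈ D := hbox_subset_D ε hε hx
    rw [Set.mem_Icc] at hx
    have hdist : dist x p₀ < η := by
      rw [dist_pi_lt_iff hη0]
      intro j
      refine Fin.cases ?_ (fun i => ?_) j
      · have h1 := hx.1 0; have h2 := hx.2 0
        simp only [hBu, Fin.cons_zero] at h1 h2
        rw [Real.dist_eq]
        simp only [hp₀def, Fin.cons_zero, sub_zero]
        rw [abs_of_nonneg (hε.le.trans h1)]
        exact h2.trans_lt hr₁η
      · have h1 := hx.1 i.succ; have h2 := hx.2 i.succ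
        simp only [hBu, Fin.cons_succ] at h1 h2
        rw [Real.dist_eq]
        simp only [hp₀def, Fin.cons_succ]
        have : |x i.succ - y i| ≤ δ := abs_sub_le_iff.2 ⟨by linarith, by linarith⟩
        linarith
    rw [pd, hFeq x hxD]
    exact (hη x (hDsub hxD) hdist).le
  -- abbreviations and constants
  have tri : ∀ p q : ℝ, |p - q| ≤ |p| + |q| := fun p q => by
    rw [sub_eq_add_neg]
    exact (abs_add_le _ _).trans (by rw [abs_neg])
  set S : ℝ := max r₁ (2 * δ) with hSdef
  have hS0 : 0 ≤ S := le_max_of_le_left hr₁0.le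
  set C₁ : ℝ := (k + 1) * (2 * (M * S ^ k)) with hC₁def
  set C₂ : ℝ := ∫ x in D, |g x| with hC₂def
  have hC₁0 : 0 ≤ C₁ := by positivity
  have hC₂0 : 0 ≤ C₂ := setIntegral_nonneg hDopen.measurableSet (fun x _ => abs_nonneg _)
  set K : ℝ := |a| * (|c| / 2) * (2 * δ) ^ k with hKdef
  have hK0 : 0 < K := by
    have h1 : 0 < |a| := abs_pos.2 ha
    have h2 : 0 < |c| := abs_pos.2 hc0
    positivity
  -- the key inequality, valid for all ε ∈ (0, r₁)
  have key : ∀ ε : ℝ, 0 < ε → ε < r₁ →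
      K * (Real.log r₁ - Real.log ε) ≤ C₁ + C₂ := by
    intro ε hε0 hεr
    set Al : Fin (k + 1) → ℝ := Fin.cons ε (fun i => y i - δ) with hAl
    have hsub : Icc Al Bu ⊆ D := hbox_subset_D ε hε0
    have hle : Al ≤ Bu := by
      intro j
      refine Fin.cases ?_ (fun i => ?_) j
      · simp only [hAl, hBu, Fin.cons_zero]; exact hεr.le
      · simp only [hAl, hBu, Fin.cons_succ]; linarith
    have hbounds : ∀ j, 0 ≤ Bu j - Al j ∧ Bu j - Al j ≤ S := by
      intro j
      refine Fin.cases ?_ (fun i => ?_) j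
      · simp only [hAl, hBu, Fin.cons_zero]
        exact ⟨by linarith, by have := le_max_left r₁ (2 * δ); linarith⟩
      · simp only [hAl, hBu, Fin.cons_succ]
        exact ⟨by linarith, by have := le_max_right r₁ (2 * δ); linarith⟩
    -- divergence theorem on the box
    have hdiv := MeasureTheory.integral_divergence_of_hasFDerivAt_off_countable'
      Al Bu hle (fun i => pd i u) (fun i x => fderiv ℝ (pd i u) x) ∅ Set.countable_empty
      (fun i => (hpdcont i).mono hsub)
      (fun x hx i => hpdiff i x (hsub ⟨fun j => (hx.1 j (Set.mem_univ j)).1.le,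
        fun j => (hx.1 j (Set.mem_univ j)).2.le⟩))
      ((hHcont.mono hsub).integrableOn_compact isCompact_Icc)
    -- bound on each face integral
    have hface : ∀ (i : Fin (k + 1)) (z : ℝ), z ∈ Icc (Al i) (Bu i) →
        |∫ x in Icc (Al ∘ i.succAbove) (Bu ∘ i.succAbove), pd i u (i.insertNth z x)|
          ≤ M * S ^ k := by
      intro i z hz
      have hvol : volume (Icc (Al ∘ i.succAbove) (Bu ∘ i.succAbove)) < ⊤ :=
        isCompact_Icc.measure_lt_top
      have hb1 : ∀ x ∈ Icc (Al ∘ i.succAbove) (Bu ∘ i.succAbove),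
          ‖pd i u (i.insertNth z x)‖ ≤ M := by
        intro x hx
        have hmem : i.insertNth z x ∈ Icc Al Bu := Fin.insertNth_mem_Icc.2 ⟨hz, hx⟩
        rw [Real.norm_eq_abs]
        exact hpdM i _ (hsub hmem)
      have hcont : ContinuousOn (fun x : Fin k → ℝ => pd i u (i.insertNth z x))
          (Icc (Al ∘ i.succAbove) (Bu ∘ i.succAbove)) := by
        refine ((hpdcont i).mono hsub).comp
          (Continuous.continuousOn ?_) ?_
        · exact Continuous.finInsertNth i continuous_const continuous_id
        · intro x hx
          exact Fin.insertNth_mem_Icc.2 ⟨hz, hx⟩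
      have hmeas : AEStronglyMeasurable (fun x : Fin k → ℝ => pd i u (i.insertNth z x))
          (volume.restrict (Icc (Al ∘ i.succAbove) (Bu ∘ i.succAbove))) :=
        hcont.aestronglyMeasurable measurableSet_Icc
      have hval := MeasureTheory.norm_setIntegral_le_of_norm_le_const hvol hb1
      rw [Real.norm_eq_abs] at hval
      refine hval.trans ?_
      have hfle : (Al ∘ i.succAbove) ≤ (Bu ∘ i.succAbove) := fun j => hle _
      rw [measureReal_def, Real.volume_Icc_pi_toReal hfle]
      calc M * ∏ j : Fin k, ((Bu ∘ i.succAbove) j - (Al ∘ i.succAbove) j)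
          ≤ M * ∏ j : Fin k, S := by
            refine mul_le_mul_of_nonneg_left
              (Finset.prod_le_prod (fun j _ => (hbounds _).1) (fun j _ => (hbounds _).2)) hM0
        _ = M * S ^ k := by
            rw [Finset.prod_const, Finset.card_univ, Fintype.card_fin]
    -- bound on the full boundary term
    have hRHS : |∑ i : Fin (k + 1),
        ((∫ x in Icc (Al ∘ i.succAbove) (Bu ∘ i.succAbove), pd i u (i.insertNth (Bu i) x)) -
          ∫ x in Icc (Al ∘ i.succAbove) (Bu ∘ i.succAbove), pd i u (i.insertNth (Al i) x))|
        ≤ C₁ := by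
      refine (Finset.abs_sum_le_sum_abs _ _).trans ?_
      have hsum : ∀ i : Fin (k + 1),
          |(∫ x in Icc (Al ∘ i.succAbove) (Bu ∘ i.succAbove), pd i u (i.insertNth (Bu i) x)) -
            ∫ x in Icc (Al ∘ i.succAbove) (Bu ∘ i.succAbove), pd i u (i.insertNth (Al i) x)|
          ≤ 2 * (M * S ^ k) := by
        intro i
        have h1 := hface i (Bu i) ⟨hle i, le_rfl⟩
        have h2 := hface i (Al i) ⟨le_rfl, hle i⟩
        have := tri (∫ x in Icc (Al ∘ i.succAbove) (Bu ∘ i.succAbove),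
          pd i u (i.insertNth (Bu i) x))
          (∫ x in Icc (Al ∘ i.succAbove) (Bu ∘ i.succAbove), pd i u (i.insertNth (Al i) x))
        linarith
      refine (Finset.sum_le_sum fun i _ => hsum i).trans ?_
      rw [Finset.sum_const, Finset.card_univ, Fintype.card_fin]
      simp only [hC₁def, nsmul_eq_mul]
      push_cast
      ring_nf
      exact le_rfl
    -- positivity of the first coordinate on the box
    have hx0pos : ∀ x ∈ Icc Al Bu, 0 < x 0 := by
      intro x hx
      have h1 := hx.1 0
      simp only [hAl, Fin.cons_zero] at h1
      exact hε0.trans_le h1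
    -- integrability facts on the box
    have hIg : IntegrableOn g (Icc Al Bu) := hg.mono_set hsub
    have hq_cont : ContinuousOn (fun x : Fin (k + 1) → ℝ => pd 0 u x / x 0) (Icc Al Bu) :=
      ((hpdcont 0).mono hsub).div ((continuous_apply 0).continuousOn)
        (fun x hx => (hx0pos x hx).ne')
    have hIq : IntegrableOn (fun x => pd 0 u x / x 0) (Icc Al Bu) :=
      hq_cont.integrableOn_compact isCompact_Icc
    have hinv_cont : ContinuousOn (fun x : Fin (k + 1) → ℝ => 1 / x 0) (Icc Al Bu) :=
      continuousOn_const.div ((continuous_apply 0).continuousOn)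
        (fun x hx => (hx0pos x hx).ne')
    have hIinv : IntegrableOn (fun x : Fin (k + 1) → ℝ => 1 / x 0) (Icc Al Bu) :=
      hinv_cont.integrableOn_compact isCompact_Icc
    -- rewrite the divergence using the PDE
    have hcongr : ∀ x ∈ Icc Al Bu,
        (∑ i : Fin (k + 1), fderiv ℝ (pd i u) x (Pi.single i 1))
          = g x - a * (pd 0 u x / x 0) := by
      intro x hx
      have hw := heq x (hsub hx)
      rw [weinstein] at hw
      have hs : (∑ i : Fin (k + 1), fderiv ℝ (pd i u) x (Pi.single i 1))
          = ∑ i : Fin (k + 1), pd i (pd i u) x := rfl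
      have hmuldiv : a / x 0 * pd 0 u x = a * (pd 0 u x / x 0) := by
        rw [div_mul_eq_mul_div, mul_div_assoc]
      rw [hs]
      linarith [hmuldiv ▸ hw]
    have hLHS : (∫ x in Icc Al Bu, ∑ i : Fin (k + 1), fderiv ℝ (pd i u) x (Pi.single i 1))
        = (∫ x in Icc Al Bu, g x) - a * ∫ x in Icc Al Bu, pd 0 u x / x 0 := by
      rw [setIntegral_congr_fun measurableSet_Icc hcongr,
        integral_sub hIg (hIq.const_mul a), integral_const_mul]
    -- balance equation
    have hbal : a * ∫ x in Icc Al Bu, pd 0 u x / x 0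
        = (∫ x in Icc Al Bu, g x) - ∑ i : Fin (k + 1),
          ((∫ x in Icc (Al ∘ i.succAbove) (Bu ∘ i.succAbove), pd i u (i.insertNth (Bu i) x)) -
            ∫ x in Icc (Al ∘ i.succAbove) (Bu ∘ i.succAbove), pd i u (i.insertNth (Al i) x)) := by
      rw [← hdiv, hLHS]; ring
    have hgabs : |∫ x in Icc Al Bu, g x| ≤ C₂ := by
      rw [← Real.norm_eq_abs]
      refine (norm_integral_le_integral_norm _).trans ?_
      refine setIntegral_mono_set hg.norm
        (Eventually.of_forall fun x => norm_nonneg _)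
        (HasSubset.Subset.eventuallyLE hsub)
    have habs : |a| * |∫ x in Icc Al Bu, pd 0 u x / x 0| ≤ C₂ + C₁ := by
      rw [← abs_mul, hbal]
      refine (tri _ _).trans ?_
      linarith [hgabs, hRHS]
    -- lower bound via closeness of the derivative to `c`
    set I : ℝ := ∫ x in Icc Al Bu, 1 / x 0 with hIdef
    have hI0 : 0 ≤ I :=
      setIntegral_nonneg measurableSet_Icc (fun x hx => by have := hx0pos x hx; positivity)
    have hclose : ∀ x ∈ Icc Al Bu,
        |pd 0 u x / x 0 - c * (1 / x 0)| ≤ |c| / 2 * (1 / x 0) := by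
      intro x hx
      have hx0 := hx0pos x hx
      have hnear := hbox_near ε hε0 x hx
      have h1 : pd 0 u x / x 0 - c * (1 / x 0) = (pd 0 u x - c) / x 0 := by
        field_simp
      have h2 : |c| / 2 * (1 / x 0) = (|c| / 2) / x 0 := by ring
      rw [h1, h2, abs_div, abs_of_pos hx0]
      gcongr
    have hdiff_int : |(∫ x in Icc Al Bu, pd 0 u x / x 0) - c * I| ≤ |c| / 2 * I := by
      have e1 : (∫ x in Icc Al Bu, pd 0 u x / x 0) - c * I
          = ∫ x in Icc Al Bu, (pd 0 u x / x 0 - c * (1 / x 0)) := by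
        rw [integral_sub hIq (hIinv.const_mul c), integral_const_mul]
      have e2 : |c| / 2 * I = ∫ x in Icc Al Bu, |c| / 2 * (1 / x 0) := by
        rw [integral_const_mul]
      rw [e1, e2, ← Real.norm_eq_abs]
      refine (norm_integral_le_integral_norm _).trans ?_
      refine setIntegral_mono_on ((hIq.sub (hIinv.const_mul c)).norm)
        (hIinv.const_mul (|c| / 2)) measurableSet_Icc ?_
      intro x hx
      rw [Real.norm_eq_abs]
      exact hclose x hx
    have hql : |c| / 2 * I ≤ |∫ x in Icc Al Bu, pd 0 u x / x 0| := by
      have h1 : |c * I| = |c| * I := by rw [abs_mul, abs_of_nonneg hI0]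
      have h2 := abs_sub_abs_le_abs_sub (c * I) (∫ x in Icc Al Bu, pd 0 u x / x 0)
      rw [abs_sub_comm] at h2
      linarith
    -- computation of `I`
    have hIval : I = (2 * δ) ^ k * (Real.log r₁ - Real.log ε) := by
      have hmp := MeasureTheory.volume_preserving_piFinSuccAbove (fun _ : Fin (k + 1) => ℝ) 0
      set e := MeasurableEquiv.piFinSuccAbove (fun _ : Fin (k + 1) => ℝ) 0 with he
      have hpre : e ⁻¹' (Icc ε r₁ ×ˢ Icc (fun i => y i - δ) (fun i => y i + δ))
          = Icc Al Bu := by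
        ext x
        simp only [Set.mem_preimage, Set.mem_prod, Set.mem_Icc, he,
          MeasurableEquiv.piFinSuccAbove_apply, Fin.removeNth, Fin.succAbove_zero,
          Pi.le_def]
        constructor
        · rintro ⟨⟨h1, h2⟩, h3, h4⟩
          constructor <;> intro j <;> refine Fin.cases ?_ (fun i => ?_) j
          · simpa [hAl] using h1
          · simpa [hAl, Fin.tail] using h3 i
          · simpa [hBu] using h2
          · simpa [hBu, Fin.tail] using h4 i
        · rintro ⟨h1, h2⟩
          refine ⟨⟨?_, ?_⟩, fun i => ?_, fun i => ?_⟩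
          · simpa [hAl] using h1 0
          · simpa [hBu] using h2 0
          · simpa [hAl, Fin.tail] using h1 i.succ
          · simpa [hBu, Fin.tail] using h2 i.succ
      have hprod_int : IntegrableOn (fun p : ℝ × (Fin k → ℝ) => 1 / p.1)
          (Icc ε r₁ ×ˢ Icc (fun i => y i - δ) (fun i => y i + δ)) := by
        refine (continuousOn_const.div continuous_fst.continuousOn
          (fun p hp => (hε0.trans_le hp.1.1).ne')).integrableOn_compact
          (isCompact_Icc.prod isCompact_Icc)
      have hstep1 : I = ∫ p in Icc ε r₁ ×ˢ Icc (fun i => y i - δ) (fun i => y i + δ),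
          1 / p.1 := by
        rw [hIdef, ← hpre]
        exact hmp.setIntegral_preimage_emb e.measurableEmbedding (fun p => 1 / p.1) _
      rw [hstep1, Measure.volume_eq_prod, setIntegral_prod _ (by rw [← Measure.volume_eq_prod]; exact hprod_int)]
      have hinner : ∀ x : ℝ,
          (∫ _ in Icc (fun i => y i - δ) (fun i : Fin k => y i + δ), (1 / x : ℝ))
            = (2 * δ) ^ k * (1 / x) := by
        intro x
        rw [setIntegral_const, measureReal_def, Real.volume_Icc_pi_toReal (fun i => by linarith), smul_eq_mul]
        congr 1
        have h2 : ∀ i : Fin k, y i + δ - (y i - δ) = 2 * δ := fun i => by ring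
        rw [Finset.prod_congr rfl fun i _ => h2 i, Finset.prod_const, Finset.card_univ,
          Fintype.card_fin]
      calc (∫ x in Icc ε r₁, ∫ _ in Icc (fun i => y i - δ) (fun i : Fin k => y i + δ),
              (1 / x : ℝ))
          = ∫ x in Icc ε r₁, (2 * δ) ^ k * (1 / x) :=
            setIntegral_congr_fun measurableSet_Icc fun x _ => hinner x
        _ = (2 * δ) ^ k * ∫ x in Icc ε r₁, 1 / x := integral_const_mul _ _
        _ = (2 * δ) ^ k * (Real.log r₁ - Real.log ε) := by
            have h0 : (0 : ℝ) ∉ Set.uIcc ε r₁ := by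
              rw [Set.uIcc_of_le hεr.le]
              exact fun h => (not_le.2 hε0) h.1
            rw [integral_Icc_eq_integral_Ioc, ← intervalIntegral.integral_of_le hεr.le,
              integral_one_div h0, Real.log_div hr₁0.ne' hε0.ne']
    -- final combination
    have hfin : K * (Real.log r₁ - Real.log ε) = |a| * (|c| / 2 * I) := by
      rw [hIval, hKdef]; ring
    rw [hfin]
    calc |a| * (|c| / 2 * I) ≤ |a| * |∫ x in Icc Al Bu, pd 0 u x / x 0| :=
          mul_le_mul_of_nonneg_left hql (abs_nonneg a)
      _ ≤ C₂ + C₁ := habs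
      _ = C₁ + C₂ := by ring
  -- derive a contradiction from `key`
  set T : ℝ := (C₁ + C₂) / K + 1 with hTdef
  have hT0 : 0 < T := by positivity
  have hε0 : 0 < r₁ * Real.exp (-T) := mul_pos hr₁0 (Real.exp_pos _)
  have hεr : r₁ * Real.exp (-T) < r₁ :=
    mul_lt_of_lt_one_right hr₁0 (Real.exp_lt_one_iff.2 (by linarith))
  have hkey := key _ hε0 hεr
  have hlog : Real.log r₁ - Real.log (r₁ * Real.exp (-T)) = T := by
    rw [Real.log_mul hr₁0.ne' (Real.exp_ne_zero _), Real.log_exp]; ring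
  rw [hlog] at hkey
  have hKT : K * T = (C₁ + C₂) + K := by
    rw [hTdef, mul_add, mul_one, mul_div_cancel₀ _ hK0.ne']
  rw [hKT] at hkey
  linarith
end
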